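/- arXiv:2207.06973 — 2 statements merged into one kernel-verified Lean document; each statement's English description precedes it below -/
import Mathlib

section
/- Let H be an m×n real matrix, Σ_XX positive semidefinite, σ > 0, and Σ_AA positive semidefinite. Then the mutual information I = (1/2)·log det(H·Σ_XX·Hᵀ·(Σ_AA + σ²I)⁻¹ + I) is nonnegative, and it is monotonically nonincreasing in Σ_AA in the Loewner order: if Σ_AA ⪯ Σ'_AA then I(Σ'_AA) ≤ I(Σ_AA). -/
open Matrix

section Aux

variable {ι : Type*} [Fintype ι] [DecidableEq ι]

open scoped MatrixOrder in
noncomputable def Matrix.PosSemidef.sqrt {A : Matrix ι ι ℝ} (_ : A.PosSemidef) :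
    Matrix ι ι ℝ := CFC.sqrt A

open scoped MatrixOrder in
lemma Matrix.PosSemidef.sqrt_mul_self {A : Matrix ι ι ℝ} (hA : A.PosSemidef) :
    hA.sqrt * hA.sqrt = A := CFC.sqrt_mul_sqrt_self A hA.nonneg

open scoped MatrixOrder in
lemma Matrix.PosSemidef.posSemidef_sqrt {A : Matrix ι ι ℝ} (hA : A.PosSemidef) :
    hA.sqrt.PosSemidef := (CFC.sqrt_nonneg A).posSemidef

lemma aux_one_le_det_one_add {P : Matrix ι ι ℝ} (hP : P.PosSemidef) :
    1 ≤ (1 + P).det := by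
  set U : Matrix ι ι ℝ := (hP.1.eigenvectorUnitary : Matrix ι ι ℝ) with hUdef
  have hUU : U * star U = 1 := (Matrix.mem_unitaryGroup_iff).mp hP.1.eigenvectorUnitary.2
  have hspec := hP.1.spectral_theorem
  set Dg : Matrix ι ι ℝ := diagonal (RCLike.ofReal ∘ hP.1.eigenvalues) with hDdef
  have h1 : 1 + P = U * (1 + Dg) * star U := by
    rw [Matrix.mul_add, Matrix.add_mul, Matrix.mul_one, hUU]
    exact congrArg (1 + ·) hspec
  have hdet : (1 + P).det = (1 + Dg).det := by
    rw [h1, det_mul, det_mul]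
    have : U.det * (star U).det = 1 := by rw [← det_mul, hUU, det_one]
    calc U.det * (1 + Dg).det * (star U).det
        = U.det * (star U).det * (1 + Dg).det := by ring
      _ = (1 + Dg).det := by rw [this, one_mul]
  rw [hdet, hDdef]
  have hone : (1 : Matrix ι ι ℝ) = diagonal (fun _ => (1 : ℝ)) := (diagonal_one).symm
  rw [hone, diagonal_add, det_diagonal]
  calc (1:ℝ) = ∏ _i : ι, (1:ℝ) := by simp
    _ ≤ ∏ i : ι, (1 + (RCLike.ofReal ∘ hP.1.eigenvalues) i) := by
        apply Finset.prod_le_prod (fun i _ => by norm_num)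
        intro i _
        have h := hP.eigenvalues_nonneg i
        simp only [Function.comp_apply, RCLike.ofReal_real_eq_id, id_eq]
        linarith

lemma aux_det_add_eq {A D : Matrix ι ι ℝ} (hA : A.PosDef) (hD : D.PosSemidef) :
    (A + D).det = (1 + hD.sqrt * A⁻¹ * hD.sqrt).det * A.det := by
  have hdA : IsUnit A.det := hA.det_pos.ne'.isUnit
  have h1 : A + D = (1 + D * A⁻¹) * A := by
    rw [Matrix.add_mul, Matrix.one_mul, Matrix.mul_assoc, nonsing_inv_mul _ hdA,
      Matrix.mul_one]
  rw [h1, det_mul]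
  congr 1
  have h2 : D * A⁻¹ = hD.sqrt * (hD.sqrt * A⁻¹) := by
    rw [← Matrix.mul_assoc, hD.sqrt_mul_self]
  rw [h2, det_one_add_mul_comm, Matrix.mul_assoc]

lemma aux_sqrt_conj_psd {A D : Matrix ι ι ℝ} (hA : A.PosSemidef) (hD : D.PosSemidef) :
    (hD.sqrt * A * hD.sqrt).PosSemidef := by
  have := hA.conjTranspose_mul_mul_same hD.sqrt
  rwa [hD.posSemidef_sqrt.1] at this

lemma aux_det_le {A D : Matrix ι ι ℝ} (hA : A.PosDef) (hD : D.PosSemidef) :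
    A.det ≤ (A + D).det := by
  rw [aux_det_add_eq hA hD]
  nth_rewrite 1 [← one_mul A.det]
  refine mul_le_mul_of_nonneg_right ?_ hA.det_pos.le
  exact aux_one_le_det_one_add (aux_sqrt_conj_psd hA.posSemidef.inv hD)

lemma aux_inv_sub {N B : Matrix ι ι ℝ} (hN : N.PosDef) (hB : B.PosSemidef) :
    (N⁻¹ - (N + B)⁻¹).PosSemidef := by
  set M := N + B with hMdef
  have hM : M.PosDef := hN.add_posSemidef hB
  have hdN : IsUnit N.det := hN.det_pos.ne'.isUnit
  have hdM : IsUnit M.det := hM.det_pos.ne'.isUnit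
  have hB' : B = M - N := by rw [hMdef]; abel
  have h0 : M⁻¹ * B * N⁻¹ = N⁻¹ - M⁻¹ := by
    rw [hB', Matrix.mul_sub, Matrix.sub_mul, nonsing_inv_mul _ hdM, Matrix.one_mul,
      Matrix.mul_assoc, mul_nonsing_inv _ hdN, Matrix.mul_one]
  have h0' : N⁻¹ * B * M⁻¹ = N⁻¹ - M⁻¹ := by
    rw [hB', Matrix.mul_sub, Matrix.sub_mul, nonsing_inv_mul _ hdN, Matrix.one_mul,
      Matrix.mul_assoc, mul_nonsing_inv _ hdM, Matrix.mul_one]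
  have key : N⁻¹ - M⁻¹ = M⁻¹ * B * M⁻¹ + M⁻¹ * B * N⁻¹ * (B * M⁻¹) := by
    have : M⁻¹ * B * N⁻¹ * (B * M⁻¹) = (N⁻¹ - M⁻¹) * (B * M⁻¹) := by rw [h0]
    rw [this, Matrix.sub_mul]
    have hNB : N⁻¹ * (B * M⁻¹) = N⁻¹ - M⁻¹ := by
      rw [← Matrix.mul_assoc, h0']
    have hMB : M⁻¹ * (B * M⁻¹) = M⁻¹ * B * M⁻¹ := by rw [Matrix.mul_assoc]
    rw [hNB, hMB]
    abel
  rw [key]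
  have hterm1 : (M⁻¹ * B * M⁻¹).PosSemidef := by
    have := hB.conjTranspose_mul_mul_same (M⁻¹)
    rwa [hM.posSemidef.inv.1] at this
  have hterm2 : (M⁻¹ * B * N⁻¹ * (B * M⁻¹)).PosSemidef := by
    have := hN.posSemidef.inv.conjTranspose_mul_mul_same (B * M⁻¹)
    have hct : (B * M⁻¹)ᴴ = M⁻¹ * B := by
      rw [conjTranspose_mul, hM.posSemidef.inv.1, hB.1]
    rw [hct] at this
    have hassoc : M⁻¹ * B * N⁻¹ * (B * M⁻¹) = M⁻¹ * B * N⁻¹ * (B * M⁻¹) := rfl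
    rwa [show M⁻¹ * B * N⁻¹ * (B * M⁻¹) = (M⁻¹ * B) * N⁻¹ * (B * M⁻¹) by
      simp [Matrix.mul_assoc]]
  exact hterm1.add hterm2

lemma aux_core {B N D : Matrix ι ι ℝ} (hB : B.PosSemidef) (hN : N.PosDef)
    (hD : D.PosSemidef) :
    (B + (N + D)).det * N.det ≤ (B + N).det * (N + D).det := by
  have hC : (B + N).PosDef := Matrix.PosDef.posSemidef_add hB hN
  have hCD : (B + (N + D)) = (B + N) + D := by abel
  rw [hCD, aux_det_add_eq hC hD, aux_det_add_eq hN hD]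
  set P := hD.sqrt * (B + N)⁻¹ * hD.sqrt with hPdef
  set Q := hD.sqrt * N⁻¹ * hD.sqrt with hQdef
  have hPpsd : P.PosSemidef := aux_sqrt_conj_psd hC.posSemidef.inv hD
  have hQP : (Q - P).PosSemidef := by
    have hinv : (N⁻¹ - (B + N)⁻¹).PosSemidef := by
      have := aux_inv_sub hN hB
      rwa [show N + B = B + N by abel] at this
    have heq : Q - P = hD.sqrt * (N⁻¹ - (B + N)⁻¹) * hD.sqrt := by
      rw [hPdef, hQdef, Matrix.mul_sub, Matrix.sub_mul]
    rw [heq]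
    exact aux_sqrt_conj_psd hinv hD
  have hdetle : (1 + P).det ≤ (1 + Q).det := by
    have h1P : (1 + P).PosDef := Matrix.PosDef.one.add_posSemidef hPpsd
    have := aux_det_le h1P hQP
    rwa [show (1 + P) + (Q - P) = 1 + Q by abel] at this
  calc (1 + P).det * (B + N).det * N.det
      ≤ (1 + Q).det * (B + N).det * N.det := by
        apply mul_le_mul_of_nonneg_right (mul_le_mul_of_nonneg_right hdetle hC.det_pos.le)
          hN.det_pos.le
    _ = (B + N).det * ((1 + Q).det * N.det) := by ring

lemma aux_one_le_ratio {B N : Matrix ι ι ℝ} (hB : B.PosSemidef) (hN : N.PosDef) :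
    1 ≤ (B + N).det * (N.det)⁻¹ := by
  rw [le_mul_inv_iff₀ hN.det_pos, one_mul]
  have := aux_det_le hN hB
  rwa [show N + B = B + N by abel] at this

end Aux

theorem stmt_7 {m n : ℕ} (H : Matrix (Fin m) (Fin n) ℝ)
    (Sxx : Matrix (Fin n) (Fin n) ℝ) (hSxx : Sxx.PosSemidef)
    (σ : ℝ) (hσ : 0 < σ)
    (MI : Matrix (Fin m) (Fin m) ℝ → ℝ)
    (hMI : ∀ Saa, MI Saa = (1 / 2) * Real.log
        (H * Sxx * H.transpose * (Saa + σ ^ 2 • (1 : Matrix (Fin m) (Fin m) ℝ))⁻¹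
          + 1).det) :
    (∀ Saa : Matrix (Fin m) (Fin m) ℝ, Saa.PosSemidef → 0 ≤ MI Saa) ∧
      (∀ Saa Saa' : Matrix (Fin m) (Fin m) ℝ, Saa.PosSemidef →
        (Saa' - Saa).PosSemidef → MI Saa' ≤ MI Saa) := by
  set B : Matrix (Fin m) (Fin m) ℝ := H * Sxx * H.transpose with hBdef
  have hBpsd : B.PosSemidef := by
    have := hSxx.mul_mul_conjTranspose_same H
    rwa [conjTranspose_eq_transpose_of_trivial] at this
  have hsmul : (σ ^ 2 • (1 : Matrix (Fin m) (Fin m) ℝ)).PosDef := by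
    rw [smul_one_eq_diagonal]
    exact posDef_diagonal_iff.mpr fun _ => by positivity
  have hNpd : ∀ Saa : Matrix (Fin m) (Fin m) ℝ, Saa.PosSemidef →
      (Saa + σ ^ 2 • (1 : Matrix (Fin m) (Fin m) ℝ)).PosDef :=
    fun Saa hSaa => Matrix.PosDef.posSemidef_add hSaa hsmul
  have hform : ∀ Saa : Matrix (Fin m) (Fin m) ℝ, Saa.PosSemidef →
      MI Saa = (1 / 2) * Real.log
        ((B + (Saa + σ ^ 2 • (1 : Matrix (Fin m) (Fin m) ℝ))).det *
          ((Saa + σ ^ 2 • (1 : Matrix (Fin m) (Fin m) ℝ)).det)⁻¹) := by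
    intro Saa hSaa
    set N := Saa + σ ^ 2 • (1 : Matrix (Fin m) (Fin m) ℝ) with hNdef
    have hN : N.PosDef := hNpd Saa hSaa
    have hdN : IsUnit N.det := hN.det_pos.ne'.isUnit
    have h1 : B * N⁻¹ + 1 = (B + N) * N⁻¹ := by
      rw [Matrix.add_mul, mul_nonsing_inv _ hdN]
    rw [hMI, h1, det_mul, det_nonsing_inv, Ring.inverse_eq_inv]
  constructor
  · intro Saa hSaa
    rw [hform Saa hSaa]
    have := aux_one_le_ratio hBpsd (hNpd Saa hSaa)
    have hlog : 0 ≤ Real.log ((B + (Saa + σ ^ 2 • (1 : Matrix (Fin m) (Fin m) ℝ))).det *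
        ((Saa + σ ^ 2 • (1 : Matrix (Fin m) (Fin m) ℝ)).det)⁻¹) := Real.log_nonneg this
    linarith
  · intro Saa Saa' hSaa hD
    have hSaa' : Saa'.PosSemidef := by
      have := hSaa.add hD
      rwa [show Saa + (Saa' - Saa) = Saa' by abel] at this
    rw [hform Saa hSaa, hform Saa' hSaa']
    set N := Saa + σ ^ 2 • (1 : Matrix (Fin m) (Fin m) ℝ) with hNdef
    set N' := Saa' + σ ^ 2 • (1 : Matrix (Fin m) (Fin m) ℝ) with hN'def
    have hN : N.PosDef := hNpd Saa hSaa
    have hN' : N'.PosDef := hNpd Saa' hSaa'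
    have hN'eq : N' = N + (Saa' - Saa) := by rw [hNdef, hN'def]; abel
    apply mul_le_mul_of_nonneg_left _ (by norm_num : (0:ℝ) ≤ 1/2)
    have hcore : (B + N').det * N.det ≤ (B + N).det * N'.det := by
      rw [hN'eq]; exact aux_core hBpsd hN hD
    apply Real.log_le_log (lt_of_lt_of_le one_pos (aux_one_le_ratio hBpsd hN'))
    rw [← div_eq_mul_inv, ← div_eq_mul_inv, div_le_div_iff₀ hN'.det_pos hN.det_pos]
    exact hcore
end

section
/- Let Σ_YY be an m×m positive definite matrix and let N = H·Σ_XX·Hᵀ ⪰ 0 with Σ_YY = N + σ²I, σ > 0. For λ ≥ 1, the minimum over all positive semidefinite Σ_AA of the form v·e_i·e_iᵀ (v ≥ 0 fixed, i varying) of the quantity (1−λ)·log det(Σ_YY + v·e_i e_iᵀ) + λ·(tr(Σ_YY⁻¹·v·e_i e_iᵀ)) − log det(v·e_i e_iᵀ + σ²I) is attained at an index i minimizing (Σ_YY⁻¹)_{ii}. Equivalently: argmin over i of (1−λ)log(1 + v(Σ_YY⁻¹)_{ii}) + λ v (Σ_YY⁻¹)_{ii} equals argmin over i of (Σ_YY⁻¹)_{ii},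 for every λ ≥ 0 and v > 0. -/
private lemma diag_pos_of_posDef {m : ℕ} {A : Matrix (Fin m) (Fin m) ℝ}
    (hA : A.PosDef) (j : Fin m) : 0 < A j j := by
  exact hA.diag_pos

private lemma strictMono_f {lam v : ℝ} (hlam : 0 ≤ lam) (hv : 0 < v) :
    StrictMonoOn (fun t : ℝ => (1 - lam) * Real.log (1 + v * t) + lam * v * t)
      (Set.Ici 0) := by
  have key : ∀ t : ℝ, 0 ≤ t →
      HasDerivAt (fun t : ℝ => (1 - lam) * Real.log (1 + v * t) + lam * v * t)
        ((1 - lam) * (v / (1 + v * t)) + lam * v) t := by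
    intro t ht
    have h1 : (0:ℝ) < 1 + v * t := by nlinarith
    have hlog : HasDerivAt (fun t : ℝ => Real.log (1 + v * t)) (v / (1 + v * t)) t := by
      have : HasDerivAt (fun t : ℝ => 1 + v * t) v t := by
        simpa using ((hasDerivAt_id t).const_mul v).const_add 1
      simpa using this.log h1.ne'
    exact (hlog.const_mul (1 - lam)).add (by simpa using (hasDerivAt_id t).const_mul (lam * v))
  apply strictMonoOn_of_deriv_pos (convex_Ici 0)
  · exact fun t ht => (key t ht).continuousAt.continuousWithinAt
  · intro t ht
    rw [interior_Ici] at ht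
    have ht' : (0:ℝ) < t := ht
    rw [(key t ht'.le).deriv]
    have h1 : (0:ℝ) < 1 + v * t := by nlinarith
    have heq : (1 - lam) * (v / (1 + v * t)) + lam * v = v * (1 + lam * v * t) / (1 + v * t) := by
      field_simp; ring
    rw [heq]
    have h2 : (0:ℝ) < 1 + lam * v * t := by positivity
    positivity

theorem stmt_8 {m : ℕ} (N Syy : Matrix (Fin m) (Fin m) ℝ) (hN : N.PosSemidef)
    (σ : ℝ) (hσ : 0 < σ)
    (hSyy : Syy = N + σ ^ 2 • (1 : Matrix (Fin m) (Fin m) ℝ))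
    (lam v : ℝ) (hlam : 0 ≤ lam) (hv : 0 < v) (i : Fin m) :
    (∀ j : Fin m, Syy⁻¹ i i ≤ Syy⁻¹ j j) ↔
      (∀ j : Fin m,
        (1 - lam) * Real.log (1 + v * Syy⁻¹ i i) + lam * v * Syy⁻¹ i i ≤
          (1 - lam) * Real.log (1 + v * Syy⁻¹ j j) + lam * v * Syy⁻¹ j j) := by
  have hPD : Syy.PosDef := by
    rw [hSyy]
    refine Matrix.PosDef.posSemidef_add hN ?_
    rw [Matrix.smul_one_eq_diagonal]
    exact Matrix.PosDef.diagonal (fun _ => by positivity)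
  have hInv : Syy⁻¹.PosDef := hPD.inv
  have hdiag : ∀ j, (0:ℝ) ≤ Syy⁻¹ j j := fun j => (diag_pos_of_posDef hInv j).le
  have key := strictMono_f hlam hv
  constructor
  · intro h j
    exact key.monotoneOn (hdiag i) (hdiag j) (h j)
  · intro h j
    exact (key.le_iff_le (hdiag i) (hdiag j)).mp (h j)
end
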